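/- Let m ≥ 2 and let R be the 2m×2m block-circulant matrix R = (1/2)·circulant(J, O, …, O, Y), where the blocks are 2×2, J is the all-ones 2×2 block, O the zero block, and Y = 2I − J. Then R is a regular orthogonal matrix of level 2: RᵀR = I₂ₘ, R·1 = 1, and 2R is an integer matrix while R is not. -/

import Mathlib

open Matrix

/-- The `2m×2m` block-circulant matrix `(1/2)·circulant(J, O, …, O, Y)` with `2×2` blocks,
`J` all-ones, `Y = 2I − J`: its `(i,j)`-block is `J/2` if `(j−i) ≡ 0 (mod m)`,
`Y/2` if `(j−i) ≡ m−1 (mod m)`, and `O` otherwise. -/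
noncomputable def Rcirc (m : ℕ) : Matrix (Fin (2*m)) (Fin (2*m)) ℝ :=
  Matrix.of fun i j =>
    if ((j : ℕ)/2 + m - (i : ℕ)/2) % m = 0 then 1/2
    else if ((j : ℕ)/2 + m - (i : ℕ)/2) % m = m - 1 then
      (if (i : ℕ) % 2 = (j : ℕ) % 2 then 1/2 else -(1/2))
    else 0

noncomputable def Rp (m : ℕ) : Matrix (ZMod m × Fin 2) (ZMod m × Fin 2) ℝ :=
  fun p q => if q.1 = p.1 then 1/2
    else if q.1 + 1 = p.1 then (if p.2 = q.2 then 1/2 else -(1/2)) else 0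

lemma cond0 {m a c : ℕ} [NeZero m] (ha : a < m) :
    ((c + m - a) % m = 0) ↔ ((c : ZMod m) = (a : ZMod m)) := by
  have h1 : (c + m - a) % m = 0 ↔ m ∣ (c + m - a) := Nat.dvd_iff_mod_eq_zero.symm
  rw [h1, ← ZMod.natCast_eq_zero_iff, Nat.cast_sub (by omega : a ≤ c + m)]
  push_cast
  rw [ZMod.natCast_self]
  constructor <;> (intro h; linear_combination h)

lemma cond1 {m a c : ℕ} (hm : 2 ≤ m) (ha : a < m) :
    ((c + m - a) % m = m - 1) ↔ ((c : ZMod m) + 1 = (a : ZMod m)) := by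
  haveI : NeZero m := ⟨by omega⟩
  have h1 : (c + m - a) % m = m - 1 ↔ (c + m - a) ≡ (m-1) [MOD m] := by
    unfold Nat.ModEq
    rw [Nat.mod_eq_of_lt (by omega : m - 1 < m)]
  rw [h1, ← ZMod.natCast_eq_natCast_iff,
    Nat.cast_sub (by omega : a ≤ c + m), Nat.cast_sub (by omega : 1 ≤ m)]
  push_cast
  rw [ZMod.natCast_self]
  constructor <;> (intro h; linear_combination h)

def emap (m : ℕ) (i : Fin (2*m)) : ZMod m × Fin 2 :=
  (((i : ℕ)/2 : ℕ), ⟨(i:ℕ) % 2, Nat.mod_lt _ two_pos⟩)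

lemma emap_bij (m : ℕ) (hm : 2 ≤ m) : Function.Bijective (emap m) := by
  haveI : NeZero m := ⟨by omega⟩
  rw [Fintype.bijective_iff_injective_and_card]
  constructor
  · intro i j h
    have hi : (i:ℕ)/2 < m := by omega
    have hj : (j:ℕ)/2 < m := by omega
    have h1 : (((i:ℕ)/2 : ℕ) : ZMod m) = (((j:ℕ)/2 : ℕ) : ZMod m) :=
      congrArg Prod.fst h
    have h2 : (i:ℕ) % 2 = (j:ℕ) % 2 := by
      have := congrArg Prod.snd h
      simpa [emap, Fin.ext_iff] using this
    have h1' : (i:ℕ)/2 = (j:ℕ)/2 := by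
      have := congrArg ZMod.val h1
      rwa [ZMod.val_cast_of_lt hi, ZMod.val_cast_of_lt hj] at this
    exact Fin.ext (by omega)
  · simp [ZMod.card]
    ring

lemma Rcirc_eq (m : ℕ) (hm : 2 ≤ m) (i j : Fin (2*m)) :
    Rcirc m i j = Rp m (emap m i) (emap m j) := by
  haveI : NeZero m := ⟨by omega⟩
  have ha : (i:ℕ)/2 < m := by omega
  have h0 := cond0 (m := m) (a := (i:ℕ)/2) (c := (j:ℕ)/2) ha
  have h1 := cond1 (m := m) (a := (i:ℕ)/2) (c := (j:ℕ)/2) hm ha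
  have h2 : ((i:ℕ) % 2 = (j:ℕ) % 2) ↔
      ((⟨(i:ℕ)%2, Nat.mod_lt _ two_pos⟩ : Fin 2) = ⟨(j:ℕ)%2, Nat.mod_lt _ two_pos⟩) := by
    simp [Fin.ext_iff]
  simp only [Rcirc, Rp, emap, Matrix.of_apply]
  simp only [h0, h1, h2]
  exact rfl

lemma Rp_rowsum (m : ℕ) [NeZero m] (hm : 2 ≤ m) (p : ZMod m × Fin 2) :
    ∑ q : ZMod m × Fin 2, Rp m p q = 1 := by
  haveI : Fact (1 < m) := ⟨by omega⟩
  obtain ⟨b, r⟩ := p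
  rw [Fintype.sum_prod_type]
  have key : ∀ c : ZMod m, ∑ s : Fin 2, Rp m (b,r) (c,s) = if c = b then 1 else 0 := by
    intro c
    rcases eq_or_ne c b with h | h
    · norm_num [Rp, h, Fin.sum_univ_two]
    · rcases eq_or_ne (c+1) b with h1 | h1
      · fin_cases r <;> norm_num [Rp, h, h1, Fin.sum_univ_two]
      · simp [Rp, h, h1, Fin.sum_univ_two]
  rw [Finset.sum_congr rfl (fun c _ => key c)]
  simp

lemma Rp_orth (m : ℕ) [NeZero m] (hm : 2 ≤ m) : (Rp m)ᵀ * Rp m = 1 := by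
  haveI : Fact (1 < m) := ⟨by omega⟩
  ext ⟨b, r⟩ ⟨c, s⟩
  rw [Matrix.mul_apply]
  simp only [Matrix.transpose_apply]
  rw [Fintype.sum_prod_type]
  have hne : ∀ a : ZMod m, a + 1 ≠ a := by
    intro a h
    have : (1 : ZMod m) = 0 := by
      have := add_right_cancel (a := a) (b := (1:ZMod m)) (c := a)
      simpa using h
    exact one_ne_zero this
  have key : ∀ a : ZMod m, ∑ t : Fin 2, Rp m (a,t) (b,r) * Rp m (a,t) (c,s)
      = (if b = a ∧ c = a then 1/2 else 0)
        + (if b + 1 = a ∧ c + 1 = a then (if r = s then 1/2 else -(1/2)) else 0) := by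
    intro a
    have hb' : b = a → ¬ (b + 1 = a) := by rintro rfl h; exact hne b h
    have hc' : c = a → ¬ (c + 1 = a) := by rintro rfl h; exact hne c h
    rcases eq_or_ne b a with hb | hb <;> rcases eq_or_ne c a with hc | hc
    · norm_num [Rp, hb, hc, hb' hb, hc' hc, Fin.sum_univ_two]
    · rcases eq_or_ne (c+1) a with hc1 | hc1
      · fin_cases r <;> fin_cases s <;>
          norm_num [Rp, hb, hc, hb' hb, hc1, Fin.sum_univ_two]
      · simp [Rp, hb, hc, hc1, Fin.sum_univ_two]
    · rcases eq_or_ne (b+1) a with hb1 | hb1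
      · fin_cases r <;> fin_cases s <;>
          norm_num [Rp, hb, hc, hc' hc, hb1, Fin.sum_univ_two]
      · simp [Rp, hb, hc, hb1, Fin.sum_univ_two]
    · rcases eq_or_ne (b+1) a with hb1 | hb1 <;> rcases eq_or_ne (c+1) a with hc1 | hc1
      · fin_cases r <;> fin_cases s <;>
          norm_num [Rp, hb, hc, hb1, hc1, Fin.sum_univ_two]
      · simp [Rp, hb, hc, hb1, hc1, Fin.sum_univ_two]
      · simp [Rp, hb, hc, hb1, hc1, Fin.sum_univ_two]
      · simp [Rp, hb, hc, hb1, hc1, Fin.sum_univ_two]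
  rw [Finset.sum_congr rfl (fun a _ => key a), Finset.sum_add_distrib]
  rcases eq_or_ne b c with hbc | hbc
  · subst hbc
    simp only [and_self]
    rw [Finset.sum_ite_eq Finset.univ b (fun _ => (1/2 : ℝ)),
        Finset.sum_ite_eq Finset.univ (b+1) (fun _ => (if r = s then (1/2:ℝ) else -(1/2)))]
    simp only [Finset.mem_univ, if_true, Matrix.one_apply, Prod.mk.injEq, true_and]
    rcases eq_or_ne r s with hrs | hrs <;> simp [hrs] <;> norm_num
  · have e1 : ∀ a : ZMod m, (if b = a ∧ c = a then (1/2:ℝ) else 0) = 0 := by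
      rintro a; rw [if_neg]; rintro ⟨rfl, rfl⟩; exact hbc rfl
    have e2 : ∀ a : ZMod m, (if b + 1 = a ∧ c + 1 = a then (if r = s then (1/2:ℝ) else -(1/2)) else 0) = 0 := by
      rintro a; rw [if_neg]
      rintro ⟨h1, h2⟩
      exact hbc (by have := h1.trans h2.symm; exact add_right_cancel this)
    simp only [e1, e2, Finset.sum_const_zero, add_zero, Matrix.one_apply, Prod.mk.injEq]
    rw [if_neg]; rintro ⟨h, -⟩; exact hbc h


/-- For `m ≥ 2`, `Rcirc m` is a regular orthogonal matrix of level 2. -/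
theorem stmt_5 (m : ℕ) (hm : 2 ≤ m) :
    (Rcirc m)ᵀ * Rcirc m = 1 ∧
    (Rcirc m).mulVec (fun _ => 1) = (fun _ => 1) ∧
    (∀ i j, ∃ z : ℤ, 2 * Rcirc m i j = (z : ℝ)) ∧
    ¬ (∀ i j, ∃ z : ℤ, Rcirc m i j = (z : ℝ)) := by
  haveI : NeZero m := ⟨by omega⟩
  have hbij := emap_bij m hm
  refine ⟨?_, ?_, ?_, ?_⟩
  · ext i j
    rw [Matrix.mul_apply]
    simp only [Matrix.transpose_apply]
    calc ∑ k, Rcirc m k i * Rcirc m k j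
        = ∑ k, Rp m (emap m k) (emap m i) * Rp m (emap m k) (emap m j) := by
          exact Finset.sum_congr rfl fun k _ => by
            rw [Rcirc_eq m hm, Rcirc_eq m hm]
      _ = ∑ p, Rp m p (emap m i) * Rp m p (emap m j) :=
          Fintype.sum_bijective (emap m) hbij _ _ (fun k => rfl)
      _ = ((Rp m)ᵀ * Rp m) (emap m i) (emap m j) := by
          rw [Matrix.mul_apply]; simp [Matrix.transpose_apply]
      _ = (1 : Matrix (ZMod m × Fin 2) (ZMod m × Fin 2) ℝ) (emap m i) (emap m j) := by
          rw [Rp_orth m hm]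
      _ = (1 : Matrix (Fin (2*m)) (Fin (2*m)) ℝ) i j := by
          rw [Matrix.one_apply, Matrix.one_apply]
          congr 1
          simp only [eq_iff_iff]
          exact ⟨fun h => hbij.1 h, fun h => by rw [h]⟩
  · funext i
    rw [Matrix.mulVec]
    simp only [dotProduct, mul_one]
    calc ∑ j, Rcirc m i j
        = ∑ j, Rp m (emap m i) (emap m j) :=
          Finset.sum_congr rfl fun j _ => Rcirc_eq m hm i j
      _ = ∑ q, Rp m (emap m i) q :=
          Fintype.sum_bijective (emap m) hbij _ _ (fun k => rfl)
      _ = 1 := Rp_rowsum m hm (emap m i)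
  · intro i j
    simp only [Rcirc, Matrix.of_apply]
    split_ifs
    exacts [⟨1, by norm_num⟩, ⟨1, by norm_num⟩, ⟨-1, by norm_num⟩, ⟨0, by norm_num⟩]
  · intro h
    obtain ⟨z, hz⟩ := h ⟨0, by omega⟩ ⟨0, by omega⟩
    simp only [Rcirc, Matrix.of_apply] at hz
    rw [if_pos (by simp [Nat.mod_self])] at hz
    have h2 : ((2*z : ℤ) : ℝ) = 1 := by push_cast; linarith
    have h3 : (2*z : ℤ) = 1 := by exact_mod_cast h2
    omega
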